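/- Let X be a compact metric space with diam(X) < π/2. Fix [x,t] ∈ Susp(X) with 0 ≤ t < π/2 and y ∈ X, and let γ_s = [y, sπ/2] for s ∈ [0,1] be the geodesic from 𝟎 to [y,π/2]. Then the unique minimizer of s ↦ d_Susp([x,t], γ_s) on [0,1] is given by γ_s with (π/2)s = arctan(cos(d(x,y))·tan(t)). In particular, the minimizing parameter (π/2)s equals t if and only if [x,t] = γ_s (i.e. x = y or t = 0). -/

import Mathlib

open Real

/-- The spherical suspension distance between `[x,t]` and `[y,s]`. -/
noncomputable def dSusp {X : Type*} [MetricSpace X] (x : X) (t : ℝ) (y : X) (s : ℝ) : ℝ :=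
  Real.arccos (Real.cos t * Real.cos s + Real.sin t * Real.sin s * Real.cos (dist x y))

/-- Projection of a point `[x,t]`, `0 ≤ t < π/2`, onto the half-meridian geodesic
`γ_s = [y, sπ/2]`, `s ∈ [0,1]`: the unique minimizer of `s ↦ d_Susp([x,t], γ_s)` on `[0,1]`
is at the parameter `s₀` with `(π/2)·s₀ = arctan(cos(d(x,y))·tan t)`; moreover the
minimizing height `(π/2)·s₀` equals `t` iff `[x,t] = γ_{s₀}`, i.e. `x = y` or `t = 0`. -/
theorem stmt_11 {X : Type*} [MetricSpace X] [CompactSpace X]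
    (hdiam : ∀ a b : X, dist a b < π / 2)
    (x y : X) (t : ℝ) (ht0 : 0 ≤ t) (ht : t < π / 2) :
    ∀ s₀ : ℝ, s₀ = Real.arctan (Real.cos (dist x y) * Real.tan t) / (π / 2) →
      s₀ ∈ Set.Icc (0 : ℝ) 1 ∧
      (∀ s ∈ Set.Icc (0 : ℝ) 1, s ≠ s₀ →
        dSusp x t y (s₀ * (π / 2)) < dSusp x t y (s * (π / 2))) ∧
      ((π / 2) * s₀ = t ↔ x = y ∨ t = 0) := by
  intro s₀ hs₀
  have hπ : (0:ℝ) < π / 2 := by positivity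
  have hd0 : (0:ℝ) ≤ dist x y := dist_nonneg
  have hd : dist x y < π/2 := hdiam x y
  set c := Real.cos (dist x y) with hcdef
  have hc : 0 < c := Real.cos_pos_of_mem_Ioo ⟨by linarith, hd⟩
  have hc1 : c ≤ 1 := Real.cos_le_one _
  have hcost : 0 < Real.cos t := Real.cos_pos_of_mem_Ioo ⟨by linarith, ht⟩
  have hsint : 0 ≤ Real.sin t := Real.sin_nonneg_of_nonneg_of_le_pi ht0 (by linarith [Real.pi_pos])
  have htan : Real.tan t = Real.sin t / Real.cos t := Real.tan_eq_sin_div_cos t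
  have htan0 : 0 ≤ Real.tan t := by rw [htan]; positivity
  set φ := Real.arctan (c * Real.tan t) with hφdef
  have hφ0 : 0 ≤ φ := by
    rw [← Real.arctan_zero]
    exact Real.arctan_strictMono.monotone (by positivity)
  have hφlt : φ < π/2 := Real.arctan_lt_pi_div_two _
  have hu₀ : s₀ * (π/2) = φ := by rw [hs₀]; field_simp
  set R := Real.sqrt (Real.cos t ^ 2 + (Real.sin t * c)^2) with hRdef
  have hR0 : 0 < R := Real.sqrt_pos.mpr (by positivity)
  have hR1 : R ≤ 1 := by
    rw [hRdef, show (1:ℝ) = Real.sqrt 1 from (Real.sqrt_one).symm]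
    apply Real.sqrt_le_sqrt
    have hc2 : c ^ 2 ≤ 1 := by nlinarith
    nlinarith [Real.sin_sq_add_cos_sq t, sq_nonneg (Real.sin t)]
  have hsq : Real.sqrt (1 + (c * Real.tan t)^2) = R / Real.cos t := by
    rw [eq_div_iff (ne_of_gt hcost), hRdef,
      ← Real.sqrt_sq hcost.le, ← Real.sqrt_mul (by positivity)]
    congr 1
    rw [htan]
    field_simp
    rw [Real.sq_sqrt (sq_nonneg _)]
  have hcosφ : Real.cos φ = Real.cos t / R := by
    rw [hφdef, Real.cos_arctan, hsq]
    rw [one_div_div]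
  have hsinφ : Real.sin φ = Real.sin t * c / R := by
    rw [hφdef, Real.sin_arctan, hsq, div_div_eq_mul_div, htan]
    field_simp
  have hfu : ∀ u : ℝ, Real.cos t * Real.cos u + Real.sin t * Real.sin u * c
      = R * Real.cos (u - φ) := by
    intro u
    rw [Real.cos_sub, hcosφ, hsinφ]
    field_simp [hR0.ne']
  refine ⟨⟨by rw [hs₀]; positivity, ?_⟩, ?_, ?_⟩
  · rw [hs₀]
    rw [div_le_one hπ]
    exact hφlt.le
  · intro s hs hne
    unfold dSusp
    rw [← hcdef, hfu, hfu, hu₀, sub_self, Real.cos_zero, mul_one]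
    have hune : s * (π/2) ≠ φ := by
      intro h
      apply hne
      rw [hs₀, ← h]
      field_simp
    have hs1 : 0 ≤ s * (π/2) := mul_nonneg hs.1 hπ.le
    have hs2 : s * (π/2) ≤ π/2 := by
      calc s * (π/2) ≤ 1 * (π/2) := mul_le_mul_of_nonneg_right hs.2 hπ.le
        _ = π/2 := one_mul _
    have habs : |s * (π/2) - φ| ≤ π := by
      rw [abs_le]
      constructor <;> [linarith; linarith]
    have hcoslt : Real.cos (s*(π/2) - φ) < 1 := by
      calc Real.cos (s*(π/2) - φ) = Real.cos |s*(π/2) - φ| := (Real.cos_abs _).symm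
        _ < Real.cos 0 := Real.strictAntiOn_cos ⟨le_rfl, Real.pi_pos.le⟩
            ⟨abs_nonneg _, habs⟩ (abs_pos.mpr (sub_ne_zero.mpr hune))
        _ = 1 := Real.cos_zero
    have h1 : R * Real.cos (s*(π/2) - φ) < R := by
      have := mul_lt_mul_of_pos_left hcoslt hR0
      linarith
    apply Real.strictAntiOn_arccos _ _ h1
    · constructor
      · have := mul_le_mul_of_nonneg_left (Real.neg_one_le_cos (s*(π/2) - φ)) hR0.le
        linarith
      · linarith
    · exact ⟨by linarith, hR1⟩
  · constructor
    · intro h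
      have hφt : φ = t := by rw [← hu₀]; linarith [mul_comm s₀ (π/2), h]
      have htt : c * Real.tan t = Real.tan t := by
        have := congrArg Real.tan hφt
        rwa [hφdef, Real.tan_arctan] at this
      by_cases ht0' : Real.tan t = 0
      · right
        have hsin : Real.sin t = 0 := by
          rw [htan, div_eq_zero_iff] at ht0'
          exact ht0'.resolve_right hcost.ne'
        rw [Real.sin_eq_zero_iff_of_lt_of_lt (by linarith) (by linarith)] at hsin
        exact hsin
      · left
        have hc1' : c = 1 := by
          have : (c - 1) * Real.tan t = 0 := by linarith
          rcases mul_eq_zero.mp this with h' | h'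
          · linarith
          · exact absurd h' ht0'
        have hdist0 : dist x y = 0 := by
          by_contra hne
          have hdpos : 0 < dist x y := lt_of_le_of_ne hd0 (Ne.symm hne)
          have : c < 1 := by
            calc c = Real.cos (dist x y) := hcdef
              _ < Real.cos 0 := Real.strictAntiOn_cos ⟨le_rfl, Real.pi_pos.le⟩
                  ⟨hd0, by linarith [Real.pi_pos]⟩ hdpos
              _ = 1 := Real.cos_zero
          linarith
        exact dist_eq_zero.mp hdist0
    · intro h
      have hφt : φ = t := by
        rcases h with h | h
        · have : c = 1 := by rw [hcdef, h, dist_self, Real.cos_zero]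
          rw [hφdef, this, one_mul, Real.arctan_tan (by linarith) ht]
        · rw [hφdef, h, Real.tan_zero, mul_zero, Real.arctan_zero]
      rw [mul_comm, hu₀, hφt]
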